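/- Under the scalar framework, suppose φ is strictly decreasing on (sup supp(𝒯(Ȳ)), ∞) and the technical assumptions (A6) and (A7) hold. Then the equation φ(a) = ζ(a) has exactly one solution in (sup supp(𝒯(Ȳ)), ∞); in particular a* is unique. -/

import Mathlib

open MeasureTheory ProbabilityTheory Filter Topology
open scoped ENNReal NNReal

noncomputable section

namespace SpecGLM

/-- The (topological) support of a measure on `ℝ`. -/
def msupport (μ : Measure ℝ) : Set ℝ := {x | ∀ U ∈ nhds x, μ U ≠ 0}

/-- `k`-th largest eigenvalue (1-indexed) of a real symmetric matrix; junk value `0`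
if the matrix is not symmetric. -/
def lambdaK {d : ℕ} (A : Matrix (Fin d) (Fin d) ℝ) (k : ℕ) : ℝ := by
  classical
  exact if hA : A.IsHermitian then
    (((List.ofFn hA.eigenvalues).insertionSort (· ≥ ·)).getD (k - 1) 0)
  else 0

/-- Empirical distribution of a finite family of real numbers. -/
def esdVec {n : ℕ} (v : Fin n → ℝ) : Measure ℝ :=
  (n : ℝ≥0∞)⁻¹ • ∑ i, Measure.dirac (v i)

/-- Empirical spectral distribution of a real symmetric matrix. -/
def esd {d : ℕ} (A : Matrix (Fin d) (Fin d) ℝ) : Measure ℝ := by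
  classical
  exact if hA : A.IsHermitian then esdVec hA.eigenvalues else 0

/-- Weak convergence of a sequence of measures on `ℝ`. -/
def WeakTendsto (ν : ℕ → Measure ℝ) (ν' : Measure ℝ) : Prop :=
  ∀ f : BoundedContinuousFunction ℝ ℝ,
    Tendsto (fun k => ∫ x, f x ∂(ν k)) atTop (𝓝 (∫ x, f x ∂ν'))

/-- Convergence in probability of a sequence of real random variables to a constant. -/
def TendstoInProbability {Ω : Type*} [MeasurableSpace Ω] (μ : Measure Ω)
    (X : ℕ → Ω → ℝ) (c : ℝ) : Prop :=
  ∀ ε : ℝ, 0 < ε → Tendsto (fun k => μ {ω | ε ≤ |X k ω - c|}) atTop (𝓝 0)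

/-- Almost sure convergence of a sequence of real random variables to a constant. -/
def TendstoAlmostSurely {Ω : Type*} [MeasurableSpace Ω] (μ : Measure Ω)
    (X : ℕ → Ω → ℝ) (c : ℝ) : Prop :=
  ∀ᵐ ω ∂μ, Tendsto (fun k => X k ω) atTop (𝓝 c)

/-- Pseudo-Lipschitz functions of finite order. -/
def PseudoLipschitz (f : ℝ → ℝ) : Prop :=
  ∃ (j : ℕ) (L : ℝ), ∀ x y : ℝ,
    |f x - f y| ≤ L * |x - y| * (1 + |x| ^ (j - 1) + |y| ^ (j - 1))

/-- A finite family of real random variables is i.i.d. with common law `ν`. -/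
def IIDLaw {Ω : Type*} [MeasurableSpace Ω] (μ : Measure Ω) {ι : Type*} [Fintype ι]
    (f : ι → Ω → ℝ) (ν : Measure ℝ) : Prop :=
  (∀ i, Measurable (f i)) ∧ (∀ i, Measure.map (f i) μ = ν) ∧
    iIndepFun f μ

/-- The positive semidefinite square root of a matrix (junk value `0` if not psd). -/
def sqrtMat {d : ℕ} (A : Matrix (Fin d) (Fin d) ℝ) : Matrix (Fin d) (Fin d) ℝ := by
  classical
  exact if hA : A.PosSemidef then
    (hA.1.eigenvectorUnitary : Matrix (Fin d) (Fin d) ℝ) *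
      Matrix.diagonal (Real.sqrt ∘ hA.1.eigenvalues) *
      (star hA.1.eigenvectorUnitary : Matrix (Fin d) (Fin d) ℝ)
  else 0

/-- Euclidean norm of a vector. -/
def vnorm {d : ℕ} (v : Fin d → ℝ) : ℝ := Real.sqrt (∑ i, v i ^ 2)

/-- Euclidean inner product. -/
def dot {d : ℕ} (u v : Fin d → ℝ) : ℝ := ∑ i, u i * v i

/-- A probability space bundled as a structure. -/
structure ProbSpace where
  carrier : Type
  inst : MeasurableSpace carrier
  meas : @Measure carrier inst
  prob : @IsProbabilityMeasure carrier inst meas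

attribute [instance] ProbSpace.inst ProbSpace.prob

end SpecGLM
namespace SpecGLM

/-- Scalar data of the GLM: aspect ratio, law of `Σ̄`, noise law, link, preprocessing. -/
structure SD where
  delta : ℝ
  muS : Measure ℝ
  Pe : Measure ℝ
  q : ℝ → ℝ → ℝ
  T : ℝ → ℝ

namespace SD

variable (S : SD)

/-- `E[Σ̄]`. -/
def meanS : ℝ := ∫ s, s ∂S.muS

/-- `sup supp Σ̄`. -/
def sSig : ℝ := sSup (msupport S.muS)

/-- `inf supp Σ̄`. -/
def iSig : ℝ := sInf (msupport S.muS)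

/-- Law of `Ḡ ~ N(0, E[Σ̄]/δ)`. -/
def muG : Measure ℝ := gaussianReal 0 (Real.toNNReal (S.meanS / S.delta))

/-- Joint law of `(Ḡ, ε̄)`. -/
def muGE : Measure (ℝ × ℝ) := S.muG.prod S.Pe

/-- Law of `Ȳ = q(Ḡ, ε̄)`. -/
def muY : Measure ℝ := Measure.map (fun p : ℝ × ℝ => S.q p.1 p.2) S.muGE

/-- `sup supp (𝒯(Ȳ))`. -/
def tauSup : ℝ := sSup (msupport (Measure.map S.T S.muY))

/-- `ℱ_a(y) = 𝒯(y)/(a - 𝒯(y))`. -/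
def Fa (a y : ℝ) : ℝ := S.T y / (a - S.T y)

/-- `E[ℱ_a(Ȳ)]`. -/
def EF (a : ℝ) : ℝ := ∫ y, S.Fa a y ∂S.muY

/-- `E[Ḡ² ℱ_a(Ȳ)]`. -/
def EG2F (a : ℝ) : ℝ := ∫ p : ℝ × ℝ, p.1 ^ 2 * S.Fa a (S.q p.1 p.2) ∂S.muGE

/-- `E[ℱ_a(Ȳ)²]`. -/
def EFsq (a : ℝ) : ℝ := ∫ y, (S.Fa a y) ^ 2 ∂S.muY

/-- `E[Ḡ² ℱ_a(Ȳ)²]`. -/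
def EG2Fsq (a : ℝ) : ℝ := ∫ p : ℝ × ℝ, p.1 ^ 2 * (S.Fa a (S.q p.1 p.2)) ^ 2 ∂S.muGE

/-- `E[((δ/E[Σ̄])Ḡ² - 1) ℱ_a(Ȳ)]`. -/
def EGm1F (a : ℝ) : ℝ :=
  ∫ p : ℝ × ℝ, ((S.delta / S.meanS) * p.1 ^ 2 - 1) * S.Fa a (S.q p.1 p.2) ∂S.muGE

/-- `E[((δ/E[Σ̄])Ḡ² - 1) ℱ_a(Ȳ)²]`. -/
def EGm1Fsq (a : ℝ) : ℝ :=
  ∫ p : ℝ × ℝ, ((S.delta / S.meanS) * p.1 ^ 2 - 1) * (S.Fa a (S.q p.1 p.2)) ^ 2 ∂S.muGE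

/-- The left end `s(a)` of the admissible interval for `γ(a)`. -/
def sfun (a : ℝ) : ℝ :=
  if 0 < S.EF a then S.sSig * S.EF a else if S.EF a < 0 then S.iSig * S.EF a else 0

/-- `E[Σ̄/(g - cΣ̄)]`. -/
def R1 (c g : ℝ) : ℝ := ∫ s, s / (g - c * s) ∂S.muS

/-- `E[Σ̄²/(g - cΣ̄)]`. -/
def R2 (c g : ℝ) : ℝ := ∫ s, s ^ 2 / (g - c * s) ∂S.muS

/-- `E[Σ̄/(g - cΣ̄)²]`. -/
def R11 (c g : ℝ) : ℝ := ∫ s, s / (g - c * s) ^ 2 ∂S.muS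

/-- `E[Σ̄²/(g - cΣ̄)²]`. -/
def R22 (c g : ℝ) : ℝ := ∫ s, s ^ 2 / (g - c * s) ^ 2 ∂S.muS

/-- `E[Σ̄³/(g - cΣ̄)²]`. -/
def R33 (c g : ℝ) : ℝ := ∫ s, s ^ 3 / (g - c * s) ^ 2 ∂S.muS

/-- `γ : (sup supp 𝒯(Ȳ), ∞) → ℝ` is the function `a ↦ γ(a)`, the unique solution in
`(s(a), ∞)` of `1 = (1/δ) E[Σ̄/(γ(a) - E[ℱ_a(Ȳ)]Σ̄)]`. -/
def IsGammaFun (γ : ℝ → ℝ) : Prop :=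
  ∀ a, S.tauSup < a →
    S.sfun a < γ a ∧ 1 = (1 / S.delta) * S.R1 (S.EF a) (γ a) ∧
      ∀ g, S.sfun a < g → 1 = (1 / S.delta) * S.R1 (S.EF a) g → g = γ a

end SD

/-- `ψ(a) = a γ(a)`. -/
def psifun (γ : ℝ → ℝ) (a : ℝ) : ℝ := a * γ a

/-- `ζ(a) = ψ(max{a, a°})`. -/
def zetafun (γ : ℝ → ℝ) (a0 a : ℝ) : ℝ := psifun γ (max a a0)

namespace SD

variable (S : SD)

/-- `φ(a) = (a/E[Σ̄]) E[Ḡ²ℱ_a(Ȳ)] E[Σ̄²/(γ(a) - E[ℱ_a(Ȳ)]Σ̄)]`. -/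
def phi (γ : ℝ → ℝ) (a : ℝ) : ℝ :=
  (a / S.meanS) * S.EG2F a * S.R2 (S.EF a) (γ a)

/-- `a°` is the largest critical point of `ψ` in `(sup supp 𝒯(Ȳ), ∞)`. -/
def IsACirc (γ : ℝ → ℝ) (a0 : ℝ) : Prop :=
  S.tauSup < a0 ∧ deriv (psifun γ) a0 = 0 ∧
    ∀ a, S.tauSup < a → deriv (psifun γ) a = 0 → a ≤ a0

/-- `a*` is the largest solution of `ζ(a) = φ(a)` in `(sup supp 𝒯(Ȳ), ∞)`. -/
def IsAStar (γ : ℝ → ℝ) (a0 astar : ℝ) : Prop :=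
  S.tauSup < astar ∧ zetafun γ a0 astar = S.phi γ astar ∧
    ∀ a, S.tauSup < a → zetafun γ a0 a = S.phi γ a → a ≤ astar

/-- `w₁`. -/
def w1 (γ : ℝ → ℝ) (astar : ℝ) : ℝ :=
  (1 / (S.delta * S.meanS)) * S.EGm1Fsq astar * (S.R2 (S.EF astar) (γ astar)) ^ 2
    + (1 / S.delta) * S.EFsq astar * S.R33 (S.EF astar) (γ astar)

/-- `w₂`. -/
def w2 (γ : ℝ → ℝ) (astar : ℝ) : ℝ :=
  (1 / S.delta) * S.EFsq astar * S.R22 (S.EF astar) (γ astar)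

/-- The limiting overlap `η`. -/
def eta (γ : ℝ → ℝ) (astar : ℝ) : ℝ :=
  Real.sqrt (((1 - S.w2 γ astar) * (S.R1 (S.EF astar) (γ astar)) ^ 2) /
    ((1 - S.w2 γ astar) * S.R22 (S.EF astar) (γ astar)
      + S.w1 γ astar * S.R11 (S.EF astar) (γ astar)))

/-- Basic scalar assumptions: `δ ∈ (0,∞)`, `Σ̄` a probability law compactly supported in
`(0,∞)`, `P_ε` a probability law with finite second moment, `q` measurable. -/
def Scalar : Prop :=
  0 < S.delta ∧ IsProbabilityMeasure S.muS ∧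
    (∃ l u : ℝ, 0 < l ∧ msupport S.muS ⊆ Set.Icc l u) ∧
    IsProbabilityMeasure S.Pe ∧ Integrable (fun x : ℝ => x ^ 2) S.Pe ∧
    Measurable (fun p : ℝ × ℝ => S.q p.1 p.2)

/-- Assumption (A5) on the preprocessing function. -/
def A5 : Prop :=
  (∃ C : ℝ, ∀ y, |S.T y| ≤ C) ∧ PseudoLipschitz S.T ∧
    0 < sSup (S.T '' msupport S.muY)

/-- Assumption (A6) on `Σ̄`. -/
def A6 : Prop :=
  ∀ x : ℝ, x ≠ 0 →
    Tendsto (fun g => S.R1 x g) (𝓝[>] (if 0 < x then x * S.sSig else x * S.iSig)) atTop ∧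
    Tendsto (fun g => S.R22 x g) (𝓝[>] (if 0 < x then x * S.sSig else x * S.iSig)) atTop ∧
    Tendsto (fun g => S.R33 x g) (𝓝[>] (if 0 < x then x * S.sSig else x * S.iSig)) atTop

/-- Assumption (A7) on the preprocessing function. -/
def A7 : Prop :=
  Tendsto S.EF (𝓝[>] S.tauSup) atTop ∧ Tendsto S.EG2F (𝓝[>] S.tauSup) atTop

/-- Replace the preprocessing function. -/
def withT (𝒯 : ℝ → ℝ) : SD := { S with T := 𝒯 }

end SD

/-- The criticality condition `a* > a°` holds for the scalar data `S`. -/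
def CriticalityHolds (S : SD) : Prop :=
  ∃ (γ : ℝ → ℝ) (a0 astar : ℝ),
    S.IsGammaFun γ ∧ S.IsACirc γ a0 ∧ S.IsAStar γ a0 astar ∧ a0 < astar

/-- Observations `y_i = q(⟨x_i, β*⟩, ε_i)` where `X = X̃ Σ^{1/2}`. -/
def yObs (S : SD) {n d : ℕ} (Sm : Matrix (Fin d) (Fin d) ℝ)
    (X : Fin n → Fin d → ℝ) (β : Fin d → ℝ) (e : Fin n → ℝ) (i : Fin n) : ℝ :=
  S.q (((Matrix.of X * sqrtMat Sm).mulVec β) i) (e i)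

/-- The spectral matrix `D = Σ^{1/2} X̃ᵀ T X̃ Σ^{1/2}`. -/
def Dmat (S : SD) {n d : ℕ} (Sm : Matrix (Fin d) (Fin d) ℝ)
    (X : Fin n → Fin d → ℝ) (β : Fin d → ℝ) (e : Fin n → ℝ) :
    Matrix (Fin d) (Fin d) ℝ :=
  sqrtMat Sm * (Matrix.of X).transpose *
    Matrix.diagonal (fun i => S.T (yObs S Sm X β e i)) * Matrix.of X * sqrtMat Sm

end SpecGLM
namespace SpecGLM

lemma ae_mem_msupport (μ : Measure ℝ) : ∀ᵐ x ∂μ, x ∈ msupport μ := by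
  rw [ae_iff]
  apply measure_null_of_locally_null
  intro x hx
  simp only [msupport, Set.mem_setOf_eq] at hx
  push_neg at hx
  obtain ⟨U, hU, hμU⟩ := hx
  exact ⟨U, mem_nhdsWithin_of_mem_nhds hU, hμU⟩

lemma PseudoLipschitz.continuous {f : ℝ → ℝ} (hf : PseudoLipschitz f) : Continuous f := by
  obtain ⟨j, L, h⟩ := hf
  rw [Metric.continuous_iff]
  intro x ε hε
  set K := |L| * (1 + (|x| + 1) ^ (j - 1) + (|x| + 1) ^ (j - 1)) with hK
  have hK0 : 0 ≤ K := by positivity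
  refine ⟨min 1 (ε / (K + 1)), lt_min one_pos (by positivity), fun y hy => ?_⟩
  rw [Real.dist_eq] at hy ⊢
  have hy1 : |y - x| < 1 := lt_of_lt_of_le hy (min_le_left _ _)
  have hy2 : |y - x| < ε / (K + 1) := lt_of_lt_of_le hy (min_le_right _ _)
  have hyb : |y| ≤ |x| + 1 := by
    have h1 := abs_sub_abs_le_abs_sub y x
    linarith
  have h1 : |f y - f x| ≤ L * |y - x| * (1 + |y| ^ (j - 1) + |x| ^ (j - 1)) := h y x
  have e1 : |y| ^ (j - 1) ≤ (|x| + 1) ^ (j - 1) := pow_le_pow_left₀ (abs_nonneg y) hyb _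
  have e2 : |x| ^ (j - 1) ≤ (|x| + 1) ^ (j - 1) :=
    pow_le_pow_left₀ (abs_nonneg x) (by linarith [abs_nonneg x]) _
  have h2 : L * |y - x| * (1 + |y| ^ (j - 1) + |x| ^ (j - 1)) ≤ K * |y - x| := by
    have e3 : L * |y - x| * (1 + |y| ^ (j - 1) + |x| ^ (j - 1)) ≤
        |L| * |y - x| * (1 + |y| ^ (j - 1) + |x| ^ (j - 1)) := by
      have : (0:ℝ) ≤ 1 + |y| ^ (j - 1) + |x| ^ (j - 1) := by positivity
      have h4 : L * |y - x| ≤ |L| * |y - x| :=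
        mul_le_mul_of_nonneg_right (le_abs_self L) (abs_nonneg _)
      exact mul_le_mul_of_nonneg_right h4 this
    have e4 : |L| * |y - x| * (1 + |y| ^ (j - 1) + |x| ^ (j - 1)) ≤
        |L| * |y - x| * (1 + (|x| + 1) ^ (j - 1) + (|x| + 1) ^ (j - 1)) :=
      mul_le_mul_of_nonneg_left (by linarith) (by positivity)
    have e5 : |L| * |y - x| * (1 + (|x| + 1) ^ (j - 1) + (|x| + 1) ^ (j - 1)) = K * |y - x| := by
      rw [hK]; ring
    linarith
  have h3 : K * |y - x| ≤ K * (ε / (K + 1)) := mul_le_mul_of_nonneg_left hy2.le hK0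
  have h4 : K * (ε / (K + 1)) < ε := by
    rw [mul_div_assoc']
    rw [div_lt_iff₀ (by positivity : (0:ℝ) < K + 1)]
    nlinarith
  linarith

lemma integrable_sq_gaussianReal (v : ℝ≥0) :
    Integrable (fun x : ℝ => x ^ 2) (gaussianReal 0 v) := by
  by_cases hv : v = 0
  · subst hv
    rw [gaussianReal_zero_var]
    refine ⟨(measurable_id.pow_const 2).aestronglyMeasurable, ?_⟩
    simp [HasFiniteIntegral, lintegral_dirac]
  · rw [gaussianReal_of_var_ne_zero 0 hv]
    rw [integrable_withDensity_iff (measurable_gaussianPDF 0 v)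
      (ae_of_all _ fun x => ENNReal.ofReal_lt_top)]
    have hv0 : v ≠ 0 := hv
    have hv' : (0:ℝ) < (v:ℝ) := by
      rw [NNReal.coe_pos]
      exact pos_iff_ne_zero.2 hv0
    have hb : (0:ℝ) < 1 / (2 * (v:ℝ)) := by positivity
    have h := (integrable_rpow_mul_exp_neg_mul_sq hb
      (by norm_num : (-1:ℝ) < 2)).const_mul ((Real.sqrt (2 * Real.pi * (v:ℝ)))⁻¹)
    refine h.congr (ae_of_all _ fun x => ?_)
    simp only [gaussianPDF_def]
    rw [ENNReal.toReal_ofReal (gaussianPDFReal_nonneg 0 v x), gaussianPDFReal]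
    have hx2' : x ^ (2:ℝ) = x ^ (2:ℕ) := by
      have hx2 := Real.rpow_natCast x 2
      norm_num at hx2
      convert hx2 using 2 <;> norm_num
    rw [hx2']
    have harg : -(1 / (2 * (v:ℝ))) * x ^ 2 = -(x - 0) ^ 2 / (2 * (v:ℝ)) := by
      field_simp
      ring
    rw [harg]
    ring


set_option maxHeartbeats 4000000 in
/-- **Proposition (Uniqueness of `a*`).** If `φ` is strictly decreasing on
`(sup supp 𝒯(Ȳ), ∞)` and (A6), (A7) hold, then the equation `φ(a) = ζ(a)` has
exactly one solution in `(sup supp 𝒯(Ȳ), ∞)`. -/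
theorem unique_aStar
    (S : SD) (hScalar : S.Scalar) (hA5 : S.A5) (hA6 : S.A6) (hA7 : S.A7)
    (γ : ℝ → ℝ) (hγ : S.IsGammaFun γ)
    (a0 : ℝ) (ha0 : S.IsACirc γ a0)
    (hmono : StrictAntiOn (S.phi γ) (Set.Ioi S.tauSup)) :
    ∃! a : ℝ, S.tauSup < a ∧ zetafun γ a0 a = S.phi γ a := by
  classical
  obtain ⟨hδ, hPS, ⟨l, u, hl, hsupp⟩, hPe, _hPe2, hq⟩ := hScalar
  obtain ⟨⟨C, hC⟩, hPL, hTpos⟩ := hA5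
  obtain ⟨hEFtop, hEG2Ftop⟩ := hA7
  haveI := hPS
  haveI := hPe
  set τ := S.tauSup with hτdef
  have hTcont : Continuous S.T := hPL.continuous
  have hTm : Measurable S.T := hTcont.measurable
  have hC0 : 0 ≤ C := le_trans (abs_nonneg _) (hC 0)
  haveI hmuG : IsProbabilityMeasure S.muG := by unfold SD.muG; infer_instance
  haveI hmuGE : IsProbabilityMeasure S.muGE := by unfold SD.muGE; infer_instance
  haveI hmuY : IsProbabilityMeasure S.muY := by
    unfold SD.muY; exact Measure.isProbabilityMeasure_map hq.aemeasurable
  haveI hmapT : IsProbabilityMeasure (Measure.map S.T S.muY) :=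
    Measure.isProbabilityMeasure_map hTm.aemeasurable
  -- nonemptiness of supports of probability measures
  have hsupp_ne : ∀ (μ : Measure ℝ), IsProbabilityMeasure μ → (msupport μ).Nonempty := by
    intro μ hμ
    rcases Set.eq_empty_or_nonempty (msupport μ) with h | h
    · exfalso
      have h2 := ae_mem_msupport μ
      rw [h, ae_iff] at h2
      simp at h2
    · exact h
  -- facts about muS support
  have haeS : ∀ᵐ s ∂S.muS, s ∈ msupport S.muS := ae_mem_msupport _
  have hSne : (msupport S.muS).Nonempty := hsupp_ne _ hPS
  have hbddA : BddAbove (msupport S.muS) := BddAbove.mono hsupp bddAbove_Icc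
  have hbddB : BddBelow (msupport S.muS) := BddBelow.mono hsupp bddBelow_Icc
  have hiS_l : l ≤ S.iSig := le_csInf hSne fun s hs => (hsupp hs).1
  have hiS_pos : 0 < S.iSig := lt_of_lt_of_le hl hiS_l
  have hiS_le_sS : S.iSig ≤ S.sSig := by
    obtain ⟨x, hx⟩ := hSne
    exact le_trans (csInf_le hbddB hx) (le_csSup hbddA hx)
  have hsS_pos : 0 < S.sSig := lt_of_lt_of_le hiS_pos hiS_le_sS
  have haeB : ∀ᵐ s ∂S.muS, S.iSig ≤ s ∧ s ≤ S.sSig :=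
    haeS.mono fun s hs => ⟨csInf_le hbddB hs, le_csSup hbddA hs⟩
  -- mean of Σ̄
  have hid_int : Integrable (fun s : ℝ => s) S.muS := by
    refine Integrable.mono' (integrable_const S.sSig) measurable_id.aestronglyMeasurable ?_
    filter_upwards [haeB] with s hs
    rw [Real.norm_eq_abs, abs_of_pos (lt_of_lt_of_le hiS_pos hs.1)]
    exact hs.2
  have hmean_ge : S.iSig ≤ S.meanS := by
    have h1 : ∫ _s, S.iSig ∂S.muS ≤ ∫ s, s ∂S.muS :=
      integral_mono_ae (integrable_const _) hid_int (haeB.mono fun s hs => hs.1)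
    simpa [integral_const, measure_univ, SD.meanS] using h1
  have hmean_pos : 0 < S.meanS := lt_of_lt_of_le hiS_pos hmean_ge
  -- facts about T and τ
  have himg : S.T '' msupport S.muY ⊆ msupport (Measure.map S.T S.muY) := by
    rintro _ ⟨y, hy, rfl⟩ U hU
    obtain ⟨V, hVU, hVopen, hyV⟩ := mem_nhds_iff.1 hU
    have hpre : S.muY (S.T ⁻¹' V) ≠ 0 := hy _ ((hVopen.preimage hTcont).mem_nhds hyV)
    intro h0
    apply hpre
    have hV0 : Measure.map S.T S.muY V = 0 :=
      le_antisymm (h0 ▸ measure_mono hVU) (zero_le)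
    rwa [Measure.map_apply hTm hVopen.measurableSet] at hV0
  have himg_ne : (S.T '' msupport S.muY).Nonempty := by
    by_contra h
    rw [Set.not_nonempty_iff_eq_empty] at h
    rw [h] at hTpos
    simp [Real.sSup_empty] at hTpos
  have hmapT_bdd : msupport (Measure.map S.T S.muY) ⊆ Set.Icc (-C) C := by
    intro x hx
    constructor
    · by_contra hlt
      push_neg at hlt
      apply hx _ (isOpen_Iio.mem_nhds hlt)
      rw [Measure.map_apply hTm measurableSet_Iio]
      have he : S.T ⁻¹' Set.Iio (-C) = ∅ := by
        ext y
        simp only [Set.mem_preimage, Set.mem_Iio, Set.mem_empty_iff_false, iff_false, not_lt]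
        linarith [abs_le.1 (hC y)]
      rw [he]; simp
    · by_contra hlt
      push_neg at hlt
      apply hx _ (isOpen_Ioi.mem_nhds hlt)
      rw [Measure.map_apply hTm measurableSet_Ioi]
      have he : S.T ⁻¹' Set.Ioi C = ∅ := by
        ext y
        simp only [Set.mem_preimage, Set.mem_Ioi, Set.mem_empty_iff_false, iff_false, not_lt]
        linarith [abs_le.1 (hC y)]
      rw [he]; simp
  have hbddT : BddAbove (msupport (Measure.map S.T S.muY)) :=
    BddAbove.mono hmapT_bdd bddAbove_Icc
  have hτ_pos : 0 < τ :=
    lt_of_lt_of_le hTpos (csSup_le_csSup hbddT himg_ne himg)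
  have haeT_le : ∀ᵐ y ∂S.muY, S.T y ≤ τ := by
    have h1 : ∀ᵐ z ∂(Measure.map S.T S.muY), z ≤ τ :=
      (ae_mem_msupport _).mono fun z hz => le_csSup hbddT hz
    rw [ae_map_iff hTm.aemeasurable (measurableSet_Iic : MeasurableSet (Set.Iic τ))] at h1
    exact h1
  have haeT_GE : ∀ᵐ p : ℝ × ℝ ∂S.muGE, S.T (S.q p.1 p.2) ≤ τ := by
    have h1 := haeT_le
    unfold SD.muY at h1
    exact (ae_map_iff hq.aemeasurable (hTm measurableSet_Iic)).1 h1
  -- Fa facts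
  have hFam : ∀ a, Measurable (S.Fa a) := fun a => hTm.div (measurable_const.sub hTm)
  have hFa_bound : ∀ a, τ < a → ∀ y : ℝ, S.T y ≤ τ → |S.Fa a y| ≤ C / (a - τ) := by
    intro a ha y hy
    have hden : 0 < a - S.T y := by linarith
    rw [SD.Fa, abs_div, abs_of_pos hden]
    exact div_le_div₀ hC0 (hC y) (by linarith) (by linarith)
  have hFa_int : ∀ a, τ < a → Integrable (S.Fa a) S.muY := by
    intro a ha
    refine Integrable.mono' (integrable_const (C / (a - τ))) (hFam a).aestronglyMeasurable ?_
    filter_upwards [haeT_le] with y hy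
    simpa [Real.norm_eq_abs] using hFa_bound a ha y hy
  have hEF_abs : ∀ a, τ < a → |S.EF a| ≤ C / (a - τ) := by
    intro a ha
    have h1 : ∀ᵐ y ∂S.muY, ‖S.Fa a y‖ ≤ C / (a - τ) := by
      filter_upwards [haeT_le] with y hy
      simpa [Real.norm_eq_abs] using hFa_bound a ha y hy
    have h2 := norm_integral_le_of_norm_le_const h1
    simpa [measure_univ, Real.norm_eq_abs, SD.EF] using h2
  -- continuity of EF
  have hEF_cont : ∀ a1, τ < a1 → ContinuousAt S.EF a1 := by
    intro a1 ha1
    have key : ContinuousAt (fun a => ∫ y, S.Fa a y ∂S.muY) a1 := by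
      apply continuousAt_of_dominated (bound := fun _ => C / ((a1 - τ) / 2))
      · exact .of_forall fun a => (hFam a).aestronglyMeasurable
      · filter_upwards [eventually_gt_nhds (show (a1 + τ) / 2 < a1 by linarith)] with a haev
        filter_upwards [haeT_le] with y hy
        have h1 : |S.Fa a y| ≤ C / (a - τ) := hFa_bound a (by linarith) y hy
        have h2 : C / (a - τ) ≤ C / ((a1 - τ) / 2) :=
          div_le_div₀ hC0 le_rfl (by linarith) (by linarith)
        rw [Real.norm_eq_abs]
        linarith
      · exact integrable_const _
      · filter_upwards [haeT_le] with y hy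
        have hne : a1 - S.T y ≠ 0 := ne_of_gt (by linarith)
        simp only [SD.Fa]
        exact continuousAt_const.div (continuousAt_id.sub continuousAt_const) hne
    exact key
  -- second moment integrability
  have hG2_muG : Integrable (fun x : ℝ => x ^ 2) S.muG := by
    unfold SD.muG; exact integrable_sq_gaussianReal _
  have hG2_int : Integrable (fun p : ℝ × ℝ => p.1 ^ 2) S.muGE := by
    have hmap : Measure.map Prod.fst S.muGE = S.muG := by
      unfold SD.muGE
      rw [Measure.map_fst_prod]
      simp [measure_univ]
    have h2 : Integrable (fun x : ℝ => x ^ 2) (Measure.map Prod.fst S.muGE) := by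
      rw [hmap]; exact hG2_muG
    rw [integrable_map_measure (by rw [hmap]; exact (measurable_id.pow_const 2).aestronglyMeasurable)
      measurable_fst.aemeasurable] at h2
    exact h2
  -- continuity of EG2F
  have hqT : Measurable (fun p : ℝ × ℝ => S.T (S.q p.1 p.2)) := hTm.comp hq
  have hEG2F_cont : ∀ a1, τ < a1 → ContinuousAt S.EG2F a1 := by
    intro a1 ha1
    have key : ContinuousAt
        (fun a => ∫ p : ℝ × ℝ, p.1 ^ 2 * S.Fa a (S.q p.1 p.2) ∂S.muGE) a1 := by
      apply continuousAt_of_dominated (bound := fun p : ℝ × ℝ => p.1 ^ 2 * (C / ((a1 - τ) / 2)))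
      · refine .of_forall fun a => Measurable.aestronglyMeasurable ?_
        exact (measurable_fst.pow_const 2).mul
          ((hTm.comp hq).div (measurable_const.sub (hTm.comp hq)))
      · filter_upwards [eventually_gt_nhds (show (a1 + τ) / 2 < a1 by linarith)] with a haev
        filter_upwards [haeT_GE] with p hp
        have h1 : |S.Fa a (S.q p.1 p.2)| ≤ C / (a - τ) := hFa_bound a (by linarith) _ hp
        have h2 : C / (a - τ) ≤ C / ((a1 - τ) / 2) :=
          div_le_div₀ hC0 le_rfl (by linarith) (by linarith)
        rw [Real.norm_eq_abs, abs_mul, abs_of_nonneg (sq_nonneg p.1)]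
        exact mul_le_mul_of_nonneg_left (le_trans h1 h2) (sq_nonneg _)
      · exact hG2_int.mul_const _
      · filter_upwards [haeT_GE] with p hp
        have hne : a1 - S.T (S.q p.1 p.2) ≠ 0 := ne_of_gt (by linarith)
        simp only [SD.Fa]
        exact continuousAt_const.mul
          (continuousAt_const.div (continuousAt_id.sub continuousAt_const) hne)
    exact key
  -- the function M
  set Mf : ℝ → ℝ := fun c => max (c * S.iSig) (c * S.sSig) with hMf
  have hMf_cont : Continuous Mf :=
    (continuous_id.mul continuous_const).max (continuous_id.mul continuous_const)
  have h_cs_le : ∀ (c s : ℝ), S.iSig ≤ s → s ≤ S.sSig → c * s ≤ Mf c := by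
    intro c s h1 h2
    rcases le_or_gt 0 c with hc | hc
    · exact le_trans (mul_le_mul_of_nonneg_left h2 hc) (le_max_right _ _)
    · exact le_trans (mul_le_mul_of_nonpos_left h1 hc.le) (le_max_left _ _)
  have h_sfun_eq : ∀ a, S.sfun a = Mf (S.EF a) := by
    intro a
    rw [SD.sfun]
    rcases lt_trichotomy (S.EF a) 0 with h | h | h
    · rw [if_neg (by linarith), if_pos h]
      have h2 : S.EF a * S.sSig ≤ S.EF a * S.iSig := mul_le_mul_of_nonpos_left hiS_le_sS h.le
      simp only [hMf]
      rw [max_eq_left h2, mul_comm]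
    · rw [h]
      simp [hMf]
    · rw [if_pos h]
      have h2 : S.EF a * S.iSig ≤ S.EF a * S.sSig := mul_le_mul_of_nonneg_left hiS_le_sS h.le
      simp only [hMf]
      rw [max_eq_right h2, mul_comm]
  have h_negMf : ∀ c : ℝ, -(|c| * S.sSig) ≤ Mf c := by
    intro c
    rcases le_or_gt 0 c with hc | hc
    · refine le_trans ?_ (le_max_right _ _)
      rw [abs_of_nonneg hc]
      nlinarith [mul_nonneg hc hsS_pos.le]
    · refine le_trans ?_ (le_max_left _ _)
      rw [abs_of_neg hc]
      have h2 : c * S.sSig ≤ c * S.iSig := mul_le_mul_of_nonpos_left hiS_le_sS hc.le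
      linarith
  have h_den_ub : ∀ (c g s : ℝ), 0 ≤ s → s ≤ S.sSig → g - c * s ≤ g + |c| * S.sSig := by
    intro c g s hs0 hssS
    have h1 : -(c * s) ≤ |c| * |s| := by rw [← abs_mul]; exact neg_le_abs _
    rw [abs_of_nonneg hs0] at h1
    have h4 : |c| * s ≤ |c| * S.sSig := mul_le_mul_of_nonneg_left hssS (abs_nonneg c)
    linarith
  have hden_ae : ∀ (c g : ℝ), Mf c < g →
      ∀ᵐ s ∂S.muS, 0 < g - c * s ∧ g - Mf c ≤ g - c * s := by
    intro c g hg
    filter_upwards [haeB] with s hs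
    have h1 := h_cs_le c s hs.1 hs.2
    constructor <;> linarith
  have hR_meas : ∀ (f : ℝ → ℝ), Measurable f → ∀ (c g : ℝ),
      Measurable (fun s => f s / (g - c * s)) :=
    fun f hf c g => hf.div (measurable_const.sub (measurable_id.const_mul c))
  have habs_id : ∀ s, S.iSig ≤ s → s ≤ S.sSig → |s| ≤ S.sSig := by
    intro s h1 h2
    rw [abs_of_pos (lt_of_lt_of_le hiS_pos h1)]
    exact h2
  have habs_sq : ∀ s, S.iSig ≤ s → s ≤ S.sSig → |s ^ 2| ≤ S.sSig ^ 2 := by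
    intro s h1 h2
    rw [abs_of_nonneg (sq_nonneg s)]
    exact pow_le_pow_left₀ (le_trans hiS_pos.le h1) h2 2
  have hRint : ∀ (f : ℝ → ℝ) (B : ℝ), Measurable f →
      (∀ s, S.iSig ≤ s → s ≤ S.sSig → |f s| ≤ B) →
      ∀ (c g : ℝ), Mf c < g → Integrable (fun s => f s / (g - c * s)) S.muS := by
    intro f B hf hB c g hg
    refine Integrable.mono' (integrable_const (B / (g - Mf c)))
      (hR_meas f hf c g).aestronglyMeasurable ?_
    filter_upwards [hden_ae c g hg, haeB] with s hs hs2
    rw [Real.norm_eq_abs, abs_div, abs_of_pos hs.1]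
    exact div_le_div₀ (le_trans (abs_nonneg _) (hB s hs2.1 hs2.2)) (hB s hs2.1 hs2.2)
      (by linarith) hs.2
  -- joint continuity of the resolvent-type integrals
  have hRcont : ∀ (f : ℝ → ℝ) (B : ℝ), Measurable f →
      (∀ s, S.iSig ≤ s → s ≤ S.sSig → |f s| ≤ B) →
      ∀ (c1 g1 : ℝ), Mf c1 < g1 →
      ContinuousAt (fun p : ℝ × ℝ => ∫ s, f s / (p.2 - p.1 * s) ∂S.muS) (c1, g1) := by
    intro f B hf hB c1 g1 hg
    have hB0 : 0 ≤ B := le_trans (abs_nonneg _) (hB S.iSig le_rfl hiS_le_sS)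
    set η := g1 - Mf c1 with hη
    have hη0 : 0 < η := sub_pos.2 hg
    apply continuousAt_of_dominated (bound := fun _ => B / (η / 2))
    · exact .of_forall fun p => (hR_meas f hf p.1 p.2).aestronglyMeasurable
    · have hmem : Metric.ball c1 (η / (4 * (S.sSig + 1))) ×ˢ Metric.ball g1 (η / 4) ∈
          nhds ((c1, g1) : ℝ × ℝ) :=
        prod_mem_nhds (Metric.ball_mem_nhds _ (by positivity)) (Metric.ball_mem_nhds _ (by positivity))
      filter_upwards [hmem] with p hp
      obtain ⟨hp1, hp2⟩ := hp
      rw [Metric.mem_ball, Real.dist_eq] at hp1 hp2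
      filter_upwards [haeB] with s hs
      have hcs : c1 * s ≤ Mf c1 := h_cs_le _ _ hs.1 hs.2
      have hspos : 0 < s := lt_of_lt_of_le hiS_pos hs.1
      have hterm : |(p.1 - c1) * s| ≤ η / 4 := by
        rw [abs_mul]
        have h2 : |s| ≤ S.sSig := habs_id s hs.1 hs.2
        have h3 : |p.1 - c1| * |s| ≤ (η / (4 * (S.sSig + 1))) * S.sSig :=
          mul_le_mul hp1.le h2 (abs_nonneg _) (by positivity)
        have h4 : (η / (4 * (S.sSig + 1))) * S.sSig ≤ η / 4 := by
          rw [div_mul_eq_mul_div, div_le_div_iff₀ (by positivity) (by norm_num : (0:ℝ) < 4)]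
          nlinarith
        linarith
      have hden2 : η / 2 ≤ p.2 - p.1 * s := by
        have e : p.2 - p.1 * s = (g1 - c1 * s) + (p.2 - g1) - (p.1 - c1) * s := by ring
        have h3 := abs_lt.1 hp2
        have h4 := abs_le.1 hterm
        have h5 : η ≤ g1 - c1 * s := by rw [hη]; linarith
        rw [e]; linarith [h3.1, h4.2]
      have hnum : |f s| ≤ B := hB s hs.1 hs.2
      rw [Real.norm_eq_abs, abs_div, abs_of_pos (lt_of_lt_of_le (by positivity) hden2)]
      exact div_le_div₀ hB0 hnum (by positivity) hden2
    · exact integrable_const _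
    · filter_upwards [haeB] with s hs
      have h1 := h_cs_le c1 s hs.1 hs.2
      have hne : g1 - c1 * s ≠ 0 := ne_of_gt (by linarith)
      exact continuousAt_const.div
        ((continuous_snd.sub (continuous_fst.mul continuous_const)).continuousAt) hne
  -- fixed point facts
  have hfix : ∀ a, τ < a → Mf (S.EF a) < γ a ∧ S.R1 (S.EF a) (γ a) = S.delta := by
    intro a ha
    obtain ⟨h1, h2, _⟩ := hγ a ha
    rw [h_sfun_eq] at h1
    refine ⟨h1, ?_⟩
    field_simp [hδ.ne'] at h2
    linarith
  have hR1_int : ∀ c g, Mf c < g → Integrable (fun s => s / (g - c * s)) S.muS :=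
    fun c g hg => hRint (fun s => s) S.sSig measurable_id habs_id c g hg
  have hDpos : ∀ (c g : ℝ), Mf c < g → 0 < g + |c| * S.sSig := by
    intro c g hg
    have := h_negMf c
    linarith
  -- lower bound for γ
  have hγ_lb : ∀ a, τ < a → S.iSig / S.delta - |S.EF a| * S.sSig ≤ γ a := by
    intro a ha
    obtain ⟨hM, hfx⟩ := hfix a ha
    have hD := hDpos _ _ hM
    have hptw : ∀ᵐ s ∂S.muS, S.iSig / (γ a + |S.EF a| * S.sSig) ≤ s / (γ a - S.EF a * s) := by
      filter_upwards [haeB, hden_ae _ _ hM] with s hs hden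
      have hub := h_den_ub (S.EF a) (γ a) s (by linarith [hiS_pos, hs.1]) hs.2
      exact div_le_div₀ (by linarith [hiS_pos, hs.1]) hs.1 hden.1 hub
    have h1 := integral_mono_ae (integrable_const _) (hR1_int _ _ hM) hptw
    rw [integral_const] at h1
    simp only [measure_univ, probReal_univ, ENNReal.toReal_one, smul_eq_mul, one_mul] at h1
    have h2 : S.iSig / (γ a + |S.EF a| * S.sSig) ≤ S.delta := by
      rw [← hfx]; exact h1
    have h3 : S.iSig ≤ S.delta * (γ a + |S.EF a| * S.sSig) := (div_le_iff₀ hD).1 h2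
    have h4 : S.iSig / S.delta ≤ γ a + |S.EF a| * S.sSig := by
      rw [div_le_iff₀ hδ, mul_comm]
      exact h3
    linarith
  -- lower bound for R2
  have hR2_ge : ∀ a, τ < a → S.iSig * S.delta ≤ S.R2 (S.EF a) (γ a) := by
    intro a ha
    obtain ⟨hM, hfx⟩ := hfix a ha
    have hptw : ∀ᵐ s ∂S.muS,
        S.iSig * (s / (γ a - S.EF a * s)) ≤ s ^ 2 / (γ a - S.EF a * s) := by
      filter_upwards [haeB, hden_ae _ _ hM] with s hs hden
      rw [← mul_div_assoc]
      rw [div_le_div_iff_of_pos_right hden.1]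
      nlinarith [hs.1, hiS_pos]
    have h1 := integral_mono_ae ((hR1_int _ _ hM).const_mul S.iSig)
      (hRint (fun s => s ^ 2) (S.sSig ^ 2) (measurable_id.pow_const 2) habs_sq _ _ hM) hptw
    rw [integral_const_mul] at h1
    have h2 : S.iSig * S.delta = S.iSig * S.R1 (S.EF a) (γ a) := by rw [hfx]
    rw [h2]
    exact h1
  -- strict antitonicity of R1 in g
  have hR1_strict : ∀ c g g', Mf c < g → g < g' → S.R1 c g' < S.R1 c g := by
    intro c g g' hMg hgg'
    have hMg' : Mf c < g' := lt_trans hMg hgg'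
    have hD : 0 < g + |c| * S.sSig := hDpos _ _ hMg
    have hD' : 0 < g' + |c| * S.sSig := hDpos _ _ hMg'
    set P := S.iSig * (g' - g) / ((g + |c| * S.sSig) * (g' + |c| * S.sSig)) with hP
    have hP0 : 0 < P :=
      div_pos (mul_pos hiS_pos (sub_pos.2 hgg')) (mul_pos hD hD')
    have hptw : ∀ᵐ s ∂S.muS, s / (g' - c * s) + P ≤ s / (g - c * s) := by
      filter_upwards [haeB, hden_ae c g hMg, hden_ae c g' hMg'] with s hs hd hd'
      have hs0 : 0 < s := lt_of_lt_of_le hiS_pos hs.1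
      have e1 : g - c * s ≤ g + |c| * S.sSig := h_den_ub c g s hs0.le hs.2
      have e2 : g' - c * s ≤ g' + |c| * S.sSig := h_den_ub c g' s hs0.le hs.2
      have hident : s / (g - c * s) - s / (g' - c * s) =
          s * (g' - g) / ((g - c * s) * (g' - c * s)) := by
        rw [div_sub_div _ _ (ne_of_gt hd.1) (ne_of_gt hd'.1)]
        ring
      have hPle : P ≤ s * (g' - g) / ((g - c * s) * (g' - c * s)) := by
        rw [hP]
        exact div_le_div₀ (by nlinarith [hs0, sub_pos.2 hgg'])
          (mul_le_mul_of_nonneg_right hs.1 (sub_pos.2 hgg').le)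
          (mul_pos hd.1 hd'.1)
          (mul_le_mul e1 e2 hd'.1.le hD.le)
      linarith
    have h2 := integral_mono_ae (f := fun s => s / (g' - c * s) + P)
      (g := fun s => s / (g - c * s)) ((hR1_int c g' hMg').add (integrable_const P))
      (hR1_int c g hMg) hptw
    have hsum : ∫ s, (s / (g' - c * s) + P) ∂S.muS =
        (∫ s, s / (g' - c * s) ∂S.muS) + P := by
      rw [integral_add (hR1_int c g' hMg') (integrable_const P), integral_const]
      simp [measure_univ]
    rw [hsum] at h2
    have hgoal : S.R1 c g' + P ≤ S.R1 c g := h2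
    linarith
  -- continuity of γ
  have hγ_cont : ∀ a1, τ < a1 → ContinuousAt γ a1 := by
    intro a1 ha1
    rw [ContinuousAt, Metric.tendsto_nhds]
    intro ε hε
    obtain ⟨hM1, hfx1⟩ := hfix a1 ha1
    set η := γ a1 - Mf (S.EF a1) with hη
    have hη0 : 0 < η := sub_pos.2 hM1
    set ε0 := min (ε / 2) (η / 2) with hε0
    have hε00 : 0 < ε0 := lt_min (by linarith) (by linarith)
    have hε0η : ε0 ≤ η / 2 := min_le_right _ _
    have hε0ε : ε0 ≤ ε / 2 := min_le_left _ _
    have hMlt : Mf (S.EF a1) < γ a1 - ε0 := by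
      rw [hη] at hε0η
      linarith
    have hv1 : S.delta < S.R1 (S.EF a1) (γ a1 - ε0) := by
      have h := hR1_strict (S.EF a1) (γ a1 - ε0) (γ a1) hMlt (by linarith)
      rwa [hfx1] at h
    have hv2 : S.R1 (S.EF a1) (γ a1 + ε0) < S.delta := by
      have h := hR1_strict (S.EF a1) (γ a1) (γ a1 + ε0) hM1 (by linarith)
      rwa [hfx1] at h
    have hcontEF := hEF_cont a1 ha1
    have hev1 : ∀ᶠ a in nhds a1, τ < a := eventually_gt_nhds ha1
    have hev2 : ∀ᶠ a in nhds a1, Mf (S.EF a) < γ a1 - ε0 := by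
      have h := (hMf_cont.continuousAt (x := S.EF a1)).comp hcontEF
      exact h.eventually_lt_const hMlt
    have hR1c : ∀ g : ℝ, Mf (S.EF a1) < g →
        Tendsto (fun a => S.R1 (S.EF a) g) (nhds a1) (nhds (S.R1 (S.EF a1) g)) := by
      intro g hg
      have h := hRcont (fun s => s) S.sSig measurable_id habs_id (S.EF a1) g hg
      have h2 : ContinuousAt (fun a => ((S.EF a, g) : ℝ × ℝ)) a1 :=
        hcontEF.prodMk continuousAt_const
      have h3 := Filter.Tendsto.comp h h2
      simpa [Function.comp_def, SD.R1] using h3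
    have hev3 : ∀ᶠ a in nhds a1, S.delta < S.R1 (S.EF a) (γ a1 - ε0) :=
      (hR1c _ hMlt).eventually_const_lt hv1
    have hev4 : ∀ᶠ a in nhds a1, S.R1 (S.EF a) (γ a1 + ε0) < S.delta :=
      (hR1c _ (by linarith)).eventually_lt_const hv2
    filter_upwards [hev1, hev2, hev3, hev4] with a h1 h2 h3 h4
    have hcontg : ContinuousOn (fun g => S.R1 (S.EF a) g)
        (Set.Icc (γ a1 - ε0) (γ a1 + ε0)) := by
      intro g hgmem
      apply ContinuousAt.continuousWithinAt
      have hgM : Mf (S.EF a) < g := lt_of_lt_of_le h2 hgmem.1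
      have hjoint := hRcont (fun s => s) S.sSig measurable_id habs_id (S.EF a) g hgM
      have hpair : ContinuousAt (fun g : ℝ => ((S.EF a, g) : ℝ × ℝ)) g :=
        continuousAt_const.prodMk continuousAt_id
      have h3 := Filter.Tendsto.comp hjoint hpair
      simpa [ContinuousAt, Function.comp_def, SD.R1] using h3
    have hsub := intermediate_value_Icc' (by linarith : γ a1 - ε0 ≤ γ a1 + ε0) hcontg
    have hδmem : S.delta ∈ Set.Icc (S.R1 (S.EF a) (γ a1 + ε0)) (S.R1 (S.EF a) (γ a1 - ε0)) :=
      ⟨h4.le, h3.le⟩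
    obtain ⟨g, hgmem, hgval⟩ := hsub hδmem
    obtain ⟨_, _, huniq⟩ := hγ a h1
    have hgγ : g = γ a := by
      apply huniq
      · rw [h_sfun_eq]
        exact lt_of_lt_of_le h2 hgmem.1
      · have hgval' : S.R1 (S.EF a) g = S.delta := hgval
        rw [hgval']
        field_simp [hδ.ne']
    rw [Real.dist_eq, ← hgγ, abs_lt]
    constructor <;> [linarith [hgmem.1]; linarith [hgmem.2]]
  -- ψ facts
  have hψ_cont : ∀ a, τ < a → ContinuousAt (psifun γ) a := by
    intro a ha
    have h : ContinuousAt (fun x => x * γ x) a := continuousAt_id.mul (hγ_cont a ha)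
    exact h
  have hψ_top : Tendsto (psifun γ) atTop atTop := by
    rw [tendsto_atTop]
    intro K
    filter_upwards [eventually_ge_atTop
      (max (τ + 2 * S.delta * S.sSig * C / S.iSig + 1) (max 1 (K * (2 * S.delta) / S.iSig)))]
      with a haA
    have ha1 : τ + 2 * S.delta * S.sSig * C / S.iSig + 1 ≤ a := le_trans (le_max_left _ _) haA
    have ha2 : 1 ≤ a := le_trans (le_trans (le_max_left _ _) (le_max_right _ _)) haA
    have ha3 : K * (2 * S.delta) / S.iSig ≤ a :=
      le_trans (le_trans (le_max_right _ _) (le_max_right _ _)) haA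
    have hDnn : 0 ≤ 2 * S.delta * S.sSig * C / S.iSig := by positivity
    have hτa : τ < a := by linarith
    have hEFa := hEF_abs a hτa
    have hkey : C * S.sSig / (2 * S.delta * S.sSig * C / S.iSig + 1) ≤
        S.iSig / (2 * S.delta) := by
      rw [div_le_div_iff₀ (by positivity) (by positivity)]
      have he : S.iSig * (2 * S.delta * S.sSig * C / S.iSig) = 2 * S.delta * S.sSig * C := by
        field_simp
      nlinarith [hiS_pos.le]
    have hEFa2 : |S.EF a| * S.sSig ≤ S.iSig / (2 * S.delta) := by
      have h1 : C / (a - τ) ≤ C / (2 * S.delta * S.sSig * C / S.iSig + 1) :=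
        div_le_div₀ hC0 le_rfl (by positivity) (by linarith)
      have h2 : |S.EF a| * S.sSig ≤ (C / (2 * S.delta * S.sSig * C / S.iSig + 1)) * S.sSig :=
        mul_le_mul_of_nonneg_right (le_trans hEFa h1) hsS_pos.le
      have h3 : (C / (2 * S.delta * S.sSig * C / S.iSig + 1)) * S.sSig =
          C * S.sSig / (2 * S.delta * S.sSig * C / S.iSig + 1) := by ring
      rw [h3] at h2
      linarith
    have hγa : S.iSig / (2 * S.delta) ≤ γ a := by
      have h5 := hγ_lb a hτa
      have h6 : S.iSig / S.delta - S.iSig / (2 * S.delta) = S.iSig / (2 * S.delta) := by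
        ring
      linarith
    have hKa : K ≤ a * (S.iSig / (2 * S.delta)) := by
      rw [div_le_iff₀ hiS_pos] at ha3
      rw [mul_div_assoc', le_div_iff₀ (by positivity : (0:ℝ) < 2 * S.delta)]
      linarith
    have hfinal : a * (S.iSig / (2 * S.delta)) ≤ a * γ a :=
      mul_le_mul_of_nonneg_left hγa (by linarith)
    show K ≤ a * γ a
    linarith
  -- Darboux / monotonicity of ψ
  have hτa0 : τ < a0 := ha0.1
  have hψ_mono : StrictMonoOn (psifun γ) (Set.Ici a0) := by
    have hdiff : ∀ x ∈ Set.Ioi a0, DifferentiableAt ℝ (psifun γ) x := by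
      intro x hx
      by_contra h
      have h0 := deriv_zero_of_not_differentiableAt h
      exact absurd (ha0.2.2 x (lt_trans hτa0 hx) h0) (not_le.2 hx)
    have hne : ∀ x ∈ Set.Ioi a0, deriv (psifun γ) x ≠ 0 := by
      intro x hx h0
      exact absurd (ha0.2.2 x (lt_trans hτa0 hx) h0) (not_le.2 hx)
    have hders : ∀ x ∈ Set.Ioi a0,
        HasDerivWithinAt (psifun γ) (deriv (psifun γ) x) (Set.Ioi a0) x :=
      fun x hx => ((hdiff x hx).hasDerivAt).hasDerivWithinAt
    rcases hasDerivWithinAt_forall_lt_or_forall_gt_of_forall_ne (convex_Ioi a0) hders hne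
      with hneg | hpos
    · exfalso
      have hanti : StrictAntiOn (psifun γ) (Set.Ioi a0) := by
        apply strictAntiOn_of_deriv_neg (convex_Ioi a0)
        · intro x hx
          exact (hψ_cont x (lt_trans hτa0 hx)).continuousWithinAt
        · intro x hx
          rw [interior_Ioi] at hx
          exact hneg x hx
      obtain ⟨b, hb1, hb2⟩ :=
        ((hψ_top.eventually_gt_atTop (psifun γ (a0 + 1))).and (eventually_gt_atTop (a0 + 1))).exists
      have h3 := hanti (Set.mem_Ioi.2 (by linarith : a0 < a0 + 1))
        (Set.mem_Ioi.2 (by linarith : a0 < b)) hb2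
      linarith
    · apply strictMonoOn_of_deriv_pos (convex_Ici a0)
      · intro x hx
        exact (hψ_cont x (lt_of_lt_of_le hτa0 hx)).continuousWithinAt
      · intro x hx
        rw [interior_Ici] at hx
        exact hpos x hx
  -- ζ facts
  have hζ_mono : MonotoneOn (zetafun γ a0) (Set.Ioi τ) := by
    intro x _ y _ hxy
    exact hψ_mono.monotoneOn (Set.mem_Ici.2 (le_max_right _ _))
      (Set.mem_Ici.2 (le_max_right _ _)) (max_le_max hxy le_rfl)
  have hζ_cont : ∀ a, τ < a → ContinuousAt (zetafun γ a0) a := by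
    intro a ha
    have h1 : ContinuousAt (fun x : ℝ => max x a0) a :=
      (continuous_id.max continuous_const).continuousAt
    have h2 : ContinuousAt (psifun γ) (max a a0) :=
      hψ_cont _ (lt_of_lt_of_le ha (le_max_left _ _))
    have h3 := Filter.Tendsto.comp h2 h1
    exact h3
  -- φ continuity
  have hφ_cont : ∀ a, τ < a → ContinuousAt (S.phi γ) a := by
    intro a ha
    obtain ⟨hM, _⟩ := hfix a ha
    have h1 : ContinuousAt (fun x : ℝ => x / S.meanS) a := continuousAt_id.div_const _
    have h2 := hEG2F_cont a ha
    have h3 : ContinuousAt (fun x => S.R2 (S.EF x) (γ x)) a := by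
      have hjoint := hRcont (fun s => s ^ 2) (S.sSig ^ 2) (measurable_id.pow_const 2)
        habs_sq (S.EF a) (γ a) hM
      have hpair : ContinuousAt (fun x => ((S.EF x, γ x) : ℝ × ℝ)) a :=
        (hEF_cont a ha).prodMk (hγ_cont a ha)
      have h3 := Filter.Tendsto.comp hjoint hpair
      simpa [ContinuousAt, Function.comp_def, SD.R2] using h3
    exact (h1.mul h2).mul h3
  -- find a point left of a0 where φ > ζ
  have hstar : ∃ aL, τ < aL ∧ aL < a0 ∧ zetafun γ a0 aL < S.phi γ aL := by
    set D := τ * S.iSig * S.delta / S.meanS with hD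
    have hD0 : 0 < D := div_pos (mul_pos (mul_pos hτ_pos hiS_pos) hδ) hmean_pos
    have hev : ∀ᶠ a in nhdsWithin τ (Set.Ioi τ),
        (|psifun γ a0| + 1) / D < S.EG2F a := hEG2Ftop.eventually_gt_atTop _
    have hev2 : Set.Ioo τ a0 ∈ nhdsWithin τ (Set.Ioi τ) :=
      Ioo_mem_nhdsGT_of_mem ⟨le_refl τ, hτa0⟩
    obtain ⟨aL, hgt, hmem⟩ := (hev.and (eventually_of_mem hev2 fun x hx => hx)).exists
    refine ⟨aL, hmem.1, hmem.2, ?_⟩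
    have hτaL : τ < aL := hmem.1
    have hEquot : 0 < (|psifun γ a0| + 1) / D := div_pos (by positivity) hD0
    have hE0 : 0 < S.EG2F aL := lt_trans hEquot hgt
    have hR2 := hR2_ge aL hτaL
    have hφ_ge : D * S.EG2F aL ≤ S.phi γ aL := by
      have e1 : D * S.EG2F aL = (τ / S.meanS) * S.EG2F aL * (S.iSig * S.delta) := by
        rw [hD]; ring
      have h1 : (τ / S.meanS) * S.EG2F aL ≤ (aL / S.meanS) * S.EG2F aL :=
        mul_le_mul_of_nonneg_right
          ((div_le_div_iff_of_pos_right hmean_pos).2 hτaL.le) hE0.le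
      have h2 : (τ / S.meanS) * S.EG2F aL * (S.iSig * S.delta) ≤
          (aL / S.meanS) * S.EG2F aL * S.R2 (S.EF aL) (γ aL) :=
        mul_le_mul h1 hR2 (by positivity)
          (mul_nonneg (div_nonneg (by linarith) hmean_pos.le) hE0.le)
      rw [e1]
      exact h2
    have hζaL : zetafun γ a0 aL = psifun γ a0 := by
      simp only [zetafun]
      rw [max_eq_right hmem.2.le]
    have h3 : |psifun γ a0| + 1 < D * S.EG2F aL := by
      have h4 := (div_lt_iff₀ hD0).1 hgt
      rw [mul_comm] at h4
      exact h4
    have habs := le_abs_self (psifun γ a0)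
    rw [hζaL]
    linarith
  obtain ⟨aL, hτaL, haLa0, hfL⟩ := hstar
  -- find a point right of a0 where ζ > φ
  obtain ⟨aR, hR⟩ :=
    ((hψ_top.eventually_gt_atTop (S.phi γ aL)).and (eventually_gt_atTop (max a0 aL))).exists
  have hτaR : τ < aR := lt_trans hτa0 (lt_of_le_of_lt (le_max_left _ _) hR.2)
  have haLR : aL < aR := lt_of_le_of_lt (le_max_right _ _) hR.2
  have hfR : S.phi γ aR < zetafun γ a0 aR := by
    have hφR : S.phi γ aR < S.phi γ aL :=
      hmono (Set.mem_Ioi.2 hτaL) (Set.mem_Ioi.2 hτaR) haLR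
    have hζR : zetafun γ a0 aR = psifun γ aR := by
      simp only [zetafun]
      rw [max_eq_left (le_of_lt (lt_of_le_of_lt (le_max_left _ _) hR.2))]
    rw [hζR]
    linarith [hR.1]
  -- IVT
  have hfc : ContinuousOn (fun a => S.phi γ a - zetafun γ a0 a) (Set.Icc aL aR) := by
    intro x hx
    have hx1 : τ < x := lt_of_lt_of_le hτaL hx.1
    exact ((hφ_cont x hx1).sub (hζ_cont x hx1)).continuousWithinAt
  have h0mem : (0:ℝ) ∈ Set.Icc (S.phi γ aR - zetafun γ a0 aR)
      (S.phi γ aL - zetafun γ a0 aL) := ⟨by linarith, by linarith⟩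
  obtain ⟨astar, hmemI, hval⟩ := intermediate_value_Icc' haLR.le hfc h0mem
  have hτstar : τ < astar := lt_of_lt_of_le hτaL hmemI.1
  have heq : zetafun γ a0 astar = S.phi γ astar := by
    have h := hval
    simp only at h
    linarith
  refine ⟨astar, ⟨hτstar, heq⟩, ?_⟩
  rintro b ⟨hb1, hb2⟩
  by_contra hne
  have key : ∀ x y, τ < x → τ < y → zetafun γ a0 x = S.phi γ x →
      zetafun γ a0 y = S.phi γ y → x < y → False := by
    intro x y hx hy hfx hfy hxy
    have h1 : zetafun γ a0 x ≤ zetafun γ a0 y :=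
      hζ_mono (Set.mem_Ioi.2 hx) (Set.mem_Ioi.2 hy) hxy.le
    have h2 : S.phi γ y < S.phi γ x := hmono (Set.mem_Ioi.2 hx) (Set.mem_Ioi.2 hy) hxy
    rw [hfx, hfy] at h1
    linarith
  rcases lt_or_gt_of_ne hne with h | h
  · exact key b astar hb1 hτstar hb2 heq h
  · exact key astar b hτstar hb1 heq hb2 h


end SpecGLM
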